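/- arXiv:1910.08281 — 4 statements merged into one kernel-verified Lean document; each statement's English description precedes it below -/
import Mathlib

section
/- Let a ∈ (0,1), let μ₀, μ₁, μ₂ ∈ ℝ and σ₀, σ₁, σ₂ > 0 with (μ₁, σ₁) ≠ (μ₂, σ₂), and let f : ℝ → ℝ be an admissible flow such that the pushforward of N(μ₀, σ₀²) under f equals the mixture a·N(μ₁, σ₁²) + (1−a)·N(μ₂, σ₂²). Then there exists i ∈ {1, 2} such that the pushforward of N(μᵢ, σᵢ²) under f⁻¹ is not a Gaussian measure, i.e., there are no μ ∈ ℝ and σ > 0 with (f⁻¹)_* N(μᵢ, σᵢ²) = N(μ, σ²). -/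
open MeasureTheory ProbabilityTheory Filter Real


/-- The Gaussian probability measure `N(m, s²)` on `ℝ`. -/
noncomputable def gauss (m s : ℝ) : Measure ℝ :=
  gaussianReal m ⟨s ^ 2, sq_nonneg s⟩

/-- `f` is an admissible flow: a bijection, continuously differentiable, with
nonvanishing derivative. -/
def IsAdmissibleFlow (f : ℝ → ℝ) : Prop :=
  Function.Bijective f ∧ ContDiff ℝ 1 f ∧ ∀ z : ℝ, deriv f z ≠ 0



lemma quad_bdd {P Q K : ℝ} (h : ∀ x, P*x^2 + Q*x ≤ K) : P < 0 ∨ (P = 0 ∧ Q = 0) := by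
  rcases lt_trichotomy P 0 with hP|hP|hP
  · exact Or.inl hP
  · right
    refine ⟨hP, ?_⟩
    by_contra hQ
    have h1 := h ((|K|+1)/Q)
    rw [hP] at h1
    have : Q * ((|K|+1)/Q) = |K|+1 := by field_simp
    have hK : |K| + 1 ≤ K := by nlinarith [abs_nonneg K]
    have := le_abs_self K
    linarith
  · exfalso
    set x := max 1 ((|Q|+|K|+1)/P) with hx
    have hx1 : (1:ℝ) ≤ x := le_max_left _ _
    have hx2 : (|Q|+|K|+1)/P ≤ x := le_max_right _ _
    have hPx : |Q| + |K| + 1 ≤ P * x := by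
      rw [div_le_iff₀ hP] at hx2; linarith [hx2]
    have h2 : P*x + Q ≥ |K| + 1 := by
      have := neg_abs_le Q; linarith
    have h3 : x * (P*x + Q) ≥ 1 * (|K|+1) := by
      apply mul_le_mul hx1 h2 (by positivity) (by linarith)
    have h4 := h x
    have := le_abs_self K
    nlinarith

lemma quad_exp_tendsto {P Q : ℝ} (hP : P < 0) :
    Tendsto (fun x : ℝ => Real.exp (P*x^2 + Q*x)) atTop (nhds 0) := by
  have h1 : Tendsto (fun x : ℝ => P*x + Q) atTop atBot :=
    tendsto_atBot_add_const_right _ Q ((tendsto_const_mul_atBot_of_neg hP).2 tendsto_id)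
  have h2 : Tendsto (fun x : ℝ => x * (P*x + Q)) atTop atBot :=
    Tendsto.atTop_mul_atBot₀ tendsto_id h1
  have h3 := Real.tendsto_exp_atBot.comp h2
  convert h3 using 2 with x
  simp only [Function.comp]
  ring_nf

lemma exp_sum_const {A B C P₁ Q₁ P₂ Q₂ : ℝ} (hA : 0 < A) (hB : 0 < B)
    (h : ∀ x, A * Real.exp (P₁*x^2+Q₁*x) + B * Real.exp (P₂*x^2+Q₂*x) = C) :
    P₁ = 0 ∧ Q₁ = 0 ∧ P₂ = 0 ∧ Q₂ = 0 := by
  have hAB : A + B = C := by have := h 0; simpa using this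
  have hC : 0 < C := by linarith
  have key : ∀ A' P Q : ℝ, 0 < A' → (∀ x, A' * Real.exp (P*x^2+Q*x) ≤ C) → P < 0 ∨ (P = 0 ∧ Q = 0) := by
    intro A' P Q hA' hx
    apply quad_bdd (K := Real.log (C/A'))
    intro x
    have h3 : Real.exp (P*x^2+Q*x) ≤ C/A' := by
      rw [le_div_iff₀ hA']; have := hx x; linarith
    exact (Real.le_log_iff_exp_le (by positivity)).2 h3
  have k1 : P₁ < 0 ∨ (P₁ = 0 ∧ Q₁ = 0) := by
    apply key A P₁ Q₁ hA
    intro x; have := h x; nlinarith [Real.exp_pos (P₂*x^2+Q₂*x)]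
  have k2 : P₂ < 0 ∨ (P₂ = 0 ∧ Q₂ = 0) := by
    apply key B P₂ Q₂ hB
    intro x; have := h x; nlinarith [Real.exp_pos (P₁*x^2+Q₁*x)]
  -- helper: one component trivial, other decaying is impossible
  have mixed : ∀ P Q B' : ℝ, 0 < B' → (∀ x, B' * Real.exp (P*x^2+Q*x) = B') → P = 0 ∧ Q = 0 := by
    intro P Q B' hB' hx
    have e1 : ∀ x : ℝ, P*x^2 + Q*x = 0 := by
      intro x
      have := hx x
      have h2 : Real.exp (P*x^2+Q*x) = 1 :=
        mul_left_cancel₀ (ne_of_gt hB') (this.trans (mul_one B').symm)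
      have := Real.exp_injective (h2.trans Real.exp_zero.symm)
      exact this
    have e2 := e1 1
    have e3 := e1 (-1)
    constructor <;> nlinarith
  rcases k1 with hP1 | ⟨hP1, hQ1⟩
  · rcases k2 with hP2 | ⟨hP2, hQ2⟩
    · exfalso
      have t1 := (quad_exp_tendsto (Q := Q₁) hP1).const_mul A
      have t2 := (quad_exp_tendsto (Q := Q₂) hP2).const_mul B
      have t3 := t1.add t2
      simp only [mul_zero, add_zero] at t3
      have t4 : Tendsto (fun _ : ℝ => C) atTop (nhds 0) := by
        apply t3.congr; intro x; exact h x
      have := tendsto_nhds_unique t4 tendsto_const_nhds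
      linarith
    · exfalso
      have h1 : ∀ x, A * Real.exp (P₁*x^2+Q₁*x) = A := by
        intro x
        have := h x
        rw [hP2, hQ2] at this
        simp at this
        linarith
      have := mixed P₁ Q₁ A hA h1
      linarith [this.1]
  · rcases k2 with hP2 | ⟨hP2, hQ2⟩
    · exfalso
      have h1 : ∀ x, B * Real.exp (P₂*x^2+Q₂*x) = B := by
        intro x
        have := h x
        rw [hP1, hQ1] at this
        simp at this
        linarith
      have := mixed P₂ Q₂ B hB h1
      linarith [this.1]
    · exact ⟨hP1, hQ1, hP2, hQ2⟩

lemma gauss_pdf_pointwise {a b m0 m1 m2 s0 s1 s2 : ℝ} (ha : 0 < a) (hb : 0 < b)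
    (h0 : 0 < s0) (h1 : 0 < s1) (h2 : 0 < s2)
    (h : gauss m0 s0 = ENNReal.ofReal a • gauss m1 s1 + ENNReal.ofReal b • gauss m2 s2) :
    ∀ x, a * gaussianPDFReal m1 ⟨s1^2, sq_nonneg s1⟩ x
        + b * gaussianPDFReal m2 ⟨s2^2, sq_nonneg s2⟩ x
      = gaussianPDFReal m0 ⟨s0^2, sq_nonneg s0⟩ x := by
  have hv : ∀ s : ℝ, 0 < s → (⟨s^2, sq_nonneg s⟩ : NNReal) ≠ 0 := by
    intro s hs hc
    have := congrArg (fun x : NNReal => (x : ℝ)) hc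
    have hs2 : s ^ 2 = 0 := this
    nlinarith
  rw [gauss, gauss, gauss, gaussianReal_of_var_ne_zero _ (hv _ h0),
    gaussianReal_of_var_ne_zero _ (hv _ h1), gaussianReal_of_var_ne_zero _ (hv _ h2),
    ← withDensity_smul' _ _ ENNReal.ofReal_ne_top,
    ← withDensity_smul' _ _ ENNReal.ofReal_ne_top] at h
  replace h := h.trans (withDensity_add_left (((measurable_gaussianPDF _ _).const_smul _)) _).symm
  have hmR : Measurable (ENNReal.ofReal a • gaussianPDF m1 ⟨s1^2, sq_nonneg s1⟩
      + ENNReal.ofReal b • gaussianPDF m2 ⟨s2^2, sq_nonneg s2⟩) := by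
    exact Measurable.add ((measurable_gaussianPDF _ _).const_smul _)
      ((measurable_gaussianPDF _ _).const_smul _)
  replace h := (withDensity_eq_iff_of_sigmaFinite
    (measurable_gaussianPDF _ _).aemeasurable hmR.aemeasurable).mp h
  have hae : ∀ᵐ x : ℝ, gaussianPDFReal m0 ⟨s0^2, sq_nonneg s0⟩ x
      = a * gaussianPDFReal m1 ⟨s1^2, sq_nonneg s1⟩ x
        + b * gaussianPDFReal m2 ⟨s2^2, sq_nonneg s2⟩ x := by
    filter_upwards [h] with x hx
    simp only [Pi.add_apply, Pi.smul_apply, smul_eq_mul, gaussianPDF] at hx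
    rw [← ENNReal.ofReal_mul ha.le, ← ENNReal.ofReal_mul hb.le] at hx
    replace hx := hx.trans (ENNReal.ofReal_add (mul_nonneg ha.le (gaussianPDFReal_nonneg _ _ _))
        (mul_nonneg hb.le (gaussianPDFReal_nonneg _ _ _))).symm
    exact ENNReal.ofReal_eq_ofReal_iff (gaussianPDFReal_nonneg _ _ _)
      (add_nonneg (mul_nonneg ha.le (gaussianPDFReal_nonneg _ _ _))
        (mul_nonneg hb.le (gaussianPDFReal_nonneg _ _ _))) |>.mp hx
  have hcont : ∀ (m : ℝ) (v : NNReal), Continuous (gaussianPDFReal m v) := by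
    intro m v
    unfold gaussianPDFReal
    fun_prop
  have heq : (fun x => gaussianPDFReal m0 ⟨s0^2, sq_nonneg s0⟩ x)
      = fun x => a * gaussianPDFReal m1 ⟨s1^2, sq_nonneg s1⟩ x
        + b * gaussianPDFReal m2 ⟨s2^2, sq_nonneg s2⟩ x := by
    refine (Continuous.ae_eq_iff_eq (μ := volume) (hcont _ _)
      ((continuous_const.mul (hcont _ _)).add (continuous_const.mul (hcont _ _)))).mp ?_
    exact hae
  intro x
  exact (congrFun heq x).symm

lemma gauss_mix_eq {a b m0 m1 m2 s0 s1 s2 : ℝ} (ha : 0 < a) (hb : 0 < b)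
    (h0 : 0 < s0) (h1 : 0 < s1) (h2 : 0 < s2)
    (h : gauss m0 s0 = ENNReal.ofReal a • gauss m1 s1 + ENNReal.ofReal b • gauss m2 s2) :
    (m1 = m0 ∧ s1 = s0) ∧ (m2 = m0 ∧ s2 = s0) := by
  have hp := gauss_pdf_pointwise ha hb h0 h1 h2 h
  simp only [gaussianPDFReal, NNReal.toReal] at hp
  have hs0 : s0 ≠ 0 := ne_of_gt h0
  have hs1 : s1 ≠ 0 := ne_of_gt h1
  have hs2 : s2 ≠ 0 := ne_of_gt h2
  have hπ := Real.pi_pos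
  have hc0 : 0 < (Real.sqrt (2*π*s0^2))⁻¹ := by
    rw [inv_pos]; exact Real.sqrt_pos.2 (by positivity)
  have hc1 : 0 < (Real.sqrt (2*π*s1^2))⁻¹ := by
    rw [inv_pos]; exact Real.sqrt_pos.2 (by positivity)
  have hc2 : 0 < (Real.sqrt (2*π*s2^2))⁻¹ := by
    rw [inv_pos]; exact Real.sqrt_pos.2 (by positivity)
  have hfun : ∀ x, (a * (Real.sqrt (2*π*s1^2))⁻¹ * Real.exp (m0^2/(2*s0^2) - m1^2/(2*s1^2)))
        * Real.exp ((1/(2*s0^2) - 1/(2*s1^2))*x^2 + (m1/s1^2 - m0/s0^2)*x)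
      + (b * (Real.sqrt (2*π*s2^2))⁻¹ * Real.exp (m0^2/(2*s0^2) - m2^2/(2*s2^2)))
        * Real.exp ((1/(2*s0^2) - 1/(2*s2^2))*x^2 + (m2/s2^2 - m0/s0^2)*x)
      = (Real.sqrt (2*π*s0^2))⁻¹ := by
    intro x
    have hpt := hp x
    have h₁ : Real.exp (m0^2/(2*s0^2) - m1^2/(2*s1^2))
        * Real.exp ((1/(2*s0^2) - 1/(2*s1^2))*x^2 + (m1/s1^2 - m0/s0^2)*x)
        * Real.exp (-(x - m0)^2 / (2*s0^2)) = Real.exp (-(x - m1)^2 / (2*s1^2)) := by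
      rw [← Real.exp_add, ← Real.exp_add]; congr 1; field_simp; ring
    have h₂ : Real.exp (m0^2/(2*s0^2) - m2^2/(2*s2^2))
        * Real.exp ((1/(2*s0^2) - 1/(2*s2^2))*x^2 + (m2/s2^2 - m0/s0^2)*x)
        * Real.exp (-(x - m0)^2 / (2*s0^2)) = Real.exp (-(x - m2)^2 / (2*s2^2)) := by
      rw [← Real.exp_add, ← Real.exp_add]; congr 1; field_simp; ring
    have E : Real.exp (-(x - m0)^2 / (2*s0^2)) ≠ 0 := Real.exp_ne_zero _
    apply mul_right_cancel₀ E
    linear_combination hpt + a * (Real.sqrt (2*π*s1^2))⁻¹ * h₁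
      + b * (Real.sqrt (2*π*s2^2))⁻¹ * h₂
  obtain ⟨hP1, hQ1, hP2, hQ2⟩ := exp_sum_const
    (mul_pos (mul_pos ha hc1) (Real.exp_pos _))
    (mul_pos (mul_pos hb hc2) (Real.exp_pos _)) hfun
  have hsq1 : s1^2 = s0^2 := by field_simp at hP1; linarith
  have hsq2 : s2^2 = s0^2 := by field_simp at hP2; linarith
  have hseq1 : s1 = s0 := by
    rcases mul_eq_zero.mp (show (s1 - s0) * (s1 + s0) = 0 by nlinarith) with h'|h' <;> linarith
  have hseq2 : s2 = s0 := by
    rcases mul_eq_zero.mp (show (s2 - s0) * (s2 + s0) = 0 by nlinarith) with h'|h' <;> linarith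
  refine ⟨⟨?_, hseq1⟩, ⟨?_, hseq2⟩⟩
  · rw [hsq1] at hQ1; field_simp at hQ1; linarith
  · rw [hsq2] at hQ2; field_simp at hQ2; linarith

theorem stmt0 (a μ₀ μ₁ μ₂ σ₀ σ₁ σ₂ : ℝ)
    (ha : a ∈ Set.Ioo (0 : ℝ) 1)
    (hσ₀ : 0 < σ₀) (hσ₁ : 0 < σ₁) (hσ₂ : 0 < σ₂)
    (hne : (μ₁, σ₁) ≠ (μ₂, σ₂))
    (f : ℝ → ℝ) (hf : IsAdmissibleFlow f)
    (hpush : Measure.map f (gauss μ₀ σ₀)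
      = ENNReal.ofReal a • gauss μ₁ σ₁ + ENNReal.ofReal (1 - a) • gauss μ₂ σ₂) :
    (¬ ∃ (μ : ℝ) (σ : ℝ), 0 < σ ∧
        Measure.map (Function.invFun f) (gauss μ₁ σ₁) = gauss μ σ) ∨
    (¬ ∃ (μ : ℝ) (σ : ℝ), 0 < σ ∧
        Measure.map (Function.invFun f) (gauss μ₂ σ₂) = gauss μ σ) := by

  by_contra hcon
  push_neg at hcon
  obtain ⟨⟨ν₁, τ₁, hτ₁, hg1⟩, ⟨ν₂, τ₂, hτ₂, hg2⟩⟩ := hcon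
  obtain ⟨hbij, hcd, hder⟩ := hf
  have hc : Continuous f := hcd.continuous
  have hmf : Measurable f := hc.measurable
  set g := Function.invFun f with hg
  have hgf : ∀ x, g (f x) = x := fun x => Function.leftInverse_invFun hbij.1 x
  have hfg : ∀ x, f (g x) = x := fun x => Function.rightInverse_invFun hbij.2 x
  have hmg : Measurable g := by
    rcases hc.strictMono_of_inj hbij.1 with hm | hm
    · have : Monotone g := by
        intro x y hxy
        by_contra hlt
        push_neg at hlt
        have := hm hlt
        rw [hfg, hfg] at this
        exact absurd hxy (not_le.2 this)
      exact this.measurable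
    · have : Antitone g := by
        intro x y hxy
        by_contra hlt
        push_neg at hlt
        have := hm hlt
        rw [hfg, hfg] at this
        exact absurd hxy (not_le.2 this)
      exact this.measurable
  -- pull back the mixture identity
  have hback : gauss μ₀ σ₀
      = ENNReal.ofReal a • gauss ν₁ τ₁ + ENNReal.ofReal (1 - a) • gauss ν₂ τ₂ := by
    have h1 : Measure.map g (Measure.map f (gauss μ₀ σ₀)) = gauss μ₀ σ₀ := by
      rw [Measure.map_map hmg hmf, show g ∘ f = id from funext hgf, Measure.map_id]
    rw [hpush, Measure.map_add _ _ hmg, Measure.map_smul, Measure.map_smul,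
      hg1, hg2] at h1
    exact h1.symm
  have hmix := gauss_mix_eq ha.1 (by linarith [ha.2] : (0:ℝ) < 1 - a) hσ₀ hτ₁ hτ₂ hback
  obtain ⟨⟨hν₁, hτ₁'⟩, ⟨hν₂, hτ₂'⟩⟩ := hmix
  -- so the two pullbacks coincide, hence the two Gaussians coincide
  have h12 : gauss μ₁ σ₁ = gauss μ₂ σ₂ := by
    have e1 : Measure.map g (gauss μ₁ σ₁) = Measure.map g (gauss μ₂ σ₂) := by
      rw [hg1, hg2, hν₁, hτ₁', hν₂, hτ₂']
    have e2 := congrArg (Measure.map f) e1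
    rwa [Measure.map_map hmf hmg, Measure.map_map hmf hmg,
      show f ∘ g = id from funext hfg, Measure.map_id, Measure.map_id] at e2
  have htriv : gauss μ₂ σ₂
      = ENNReal.ofReal a • gauss μ₁ σ₁ + ENNReal.ofReal (1 - a) • gauss μ₁ σ₁ := by
    rw [← add_smul, ← ENNReal.ofReal_add ha.1.le (by linarith [ha.2]),
      show a + (1 - a) = 1 by ring, ENNReal.ofReal_one, one_smul, h12]
  obtain ⟨⟨hm1, hs1⟩, _⟩ := gauss_mix_eq ha.1 (by linarith [ha.2] : (0:ℝ) < 1 - a)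
    hσ₂ hσ₁ hσ₁ htriv
  exact hne (Prod.ext hm1 hs1)
end

section
/- Let a ∈ (0,1), let μ₀, μ₁, μ₂ ∈ ℝ and σ₀, σ₁, σ₂ > 0 with σ₁ > σ₂, and let f : ℝ → ℝ be an admissible flow such that the pushforward of N(μ₀, σ₀²) under f equals the mixture a·N(μ₁, σ₁²) + (1−a)·N(μ₂, σ₂²). Then the pushforward of the first component N(μ₁, σ₁²) under f⁻¹ is not a Gaussian measure: there are no μ ∈ ℝ and σ > 0 with (f⁻¹)_* N(μ₁, σ₁²) = N(μ, σ²). -/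
open MeasureTheory ProbabilityTheory

section Aux
open Filter Real

lemma gauss_var_ne {s : ℝ} (hs : 0 < s) : (⟨s ^ 2, sq_nonneg s⟩ : NNReal) ≠ 0 := by
  intro h
  have := congrArg (fun x : NNReal => (x : ℝ)) h
  change s ^ 2 = (0:ℝ) at this
  exact hs.ne' (by nlinarith)

-- monotonicity lemma
lemma flow_mono {f : ℝ → ℝ} (hf : Function.Bijective f ∧ ContDiff ℝ 1 f ∧ ∀ z : ℝ, deriv f z ≠ 0) :
    StrictMono f ∨ StrictAnti f := by
  obtain ⟨hbij, hcd, hd⟩ := hf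
  have hderiv : ∀ x, HasDerivAt f (deriv f x) x := fun x =>
    (hcd.differentiable one_ne_zero).differentiableAt.hasDerivAt
  have hcont : Continuous (deriv f) := hcd.continuous_deriv le_rfl
  rcases lt_or_gt_of_ne (hd 0) with h0 | h0
  · right
    refine strictAnti_of_deriv_neg fun x => ?_
    by_contra hx
    push_neg at hx
    rcases lt_or_eq_of_le hx with hx' | hx'
    · obtain ⟨c, _, hc⟩ := intermediate_value_uIcc (a := 0) (b := x) (f := deriv f)
        (hcont.continuousOn) (show (0:ℝ) ∈ Set.uIcc (deriv f 0) (deriv f x) from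
          Set.mem_uIcc.2 (Or.inl ⟨le_of_lt h0, le_of_lt hx'⟩))
      exact hd c hc
    · exact hd x hx'.symm
  · left
    refine strictMono_of_deriv_pos fun x => ?_
    by_contra hx
    push_neg at hx
    rcases lt_or_eq_of_le hx with hx' | hx'
    · obtain ⟨c, _, hc⟩ := intermediate_value_uIcc (a := x) (b := 0) (f := deriv f)
        (hcont.continuousOn) (show (0:ℝ) ∈ Set.uIcc (deriv f x) (deriv f 0) from
          Set.mem_uIcc.2 (Or.inl ⟨le_of_lt hx', le_of_lt h0⟩))
      exact hd c hc
    · exact hd x hx'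

-- affine map of gauss
lemma gauss_map_affine (m s r c : ℝ) :
    Measure.map (fun x => r * x + c) (gauss m s) = gauss (r * m + c) (|r| * s) := by
  have h1 : (fun x : ℝ => r * x + c) = (fun x : ℝ => x + c) ∘ (fun x : ℝ => r * x) := rfl
  rw [gauss, h1, ← Measure.map_map (measurable_id'.add_const c) (measurable_id'.const_mul r),
    gaussianReal_map_const_mul (μ := m) (v := ⟨s ^ 2, sq_nonneg s⟩) r, gaussianReal_map_add_const]
  unfold gauss
  congr 1
  ext
  change r ^ 2 * s ^ 2 = (|r| * s) ^ 2
  rw [mul_pow, sq_abs]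

lemma gauss_Iic (m s t : ℝ) (hs : 0 < s) :
    gauss m s (Set.Iic t) = gauss 0 1 (Set.Iic ((t - m) / s)) := by
  have h : gauss m s = Measure.map (fun x => s * x + m) (gauss 0 1) := by
    rw [gauss_map_affine, mul_zero, zero_add, abs_of_pos hs, mul_one]
  rw [h, Measure.map_apply (by fun_prop) measurableSet_Iic]
  congr 1
  ext x
  simp only [Set.mem_preimage, Set.mem_Iic]
  rw [le_div_iff₀ hs]
  constructor <;> intro hx <;> nlinarith [hx]

lemma gauss_Ici (m s u : ℝ) :
    gauss m s (Set.Ici u) = gauss m s (Set.Iic (2 * m - u)) := by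
  have h : Measure.map (fun x => (-1) * x + 2 * m) (gauss m s) = gauss m s := by
    rw [gauss_map_affine]
    norm_num
    congr 1
    ring
  conv_lhs => rw [← h]
  rw [Measure.map_apply (by fun_prop) measurableSet_Ici]
  congr 1
  ext x
  simp only [Set.mem_preimage, Set.mem_Ici, Set.mem_Iic]
  constructor <;> intro hx <;> linarith

-- strict monotonicity of the standard CDF
lemma gauss_cdf_injective : Function.Injective (fun t => gauss 0 1 (Set.Iic t)) := by
  have hmono : StrictMono (fun t => gauss 0 1 (Set.Iic t)) := by
    intro t t' htt
    have hunion : Set.Iic t ∪ Set.Ioc t t' = Set.Iic t' := Set.Iic_union_Ioc_eq_Iic htt.le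
    have hdisj : Disjoint (Set.Iic t) (Set.Ioc t t') := by
      rw [Set.disjoint_left]
      rintro x hx ⟨h1, _⟩
      exact absurd hx (not_le.2 h1)
    have hpos : gauss 0 1 (Set.Ioc t t') ≠ 0 := by
      intro h0
      have hac := gaussianReal_absolutelyContinuous' 0 (v := ⟨(1:ℝ)^2, sq_nonneg 1⟩) (by
        intro h
        have := congrArg (fun x : NNReal => (x : ℝ)) h
        norm_num at this
        exact one_ne_zero this)
      have : (volume : Measure ℝ) (Set.Ioc t t') = 0 := hac h0
      rw [Real.volume_Ioc] at this
      simp [ENNReal.ofReal_eq_zero] at this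
      linarith
    calc gauss 0 1 (Set.Iic t)
        < gauss 0 1 (Set.Iic t) + gauss 0 1 (Set.Ioc t t') := by
          haveI : IsProbabilityMeasure (gauss 0 1) :=
            instIsProbabilityMeasureGaussianReal 0 _
          exact ENNReal.lt_add_right (measure_ne_top _ _) hpos
      _ = gauss 0 1 (Set.Iic t') := by
          rw [← measure_union hdisj measurableSet_Ioc, hunion]
  exact hmono.injective

lemma quad_tendsto_atTop {α β : ℝ} (γ : ℝ) (hα : 0 < α) :
    Tendsto (fun x : ℝ => α * x ^ 2 + β * x + γ) atTop atTop := by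
  have h1 : Tendsto (fun x : ℝ => x * (α * x + β) + γ) atTop atTop := by
    refine tendsto_atTop_add_const_right _ γ ?_
    exact tendsto_id.atTop_mul_atTop₀
      (tendsto_atTop_add_const_right _ β (tendsto_id.const_mul_atTop hα))
  refine h1.congr fun x => by ring

lemma quad_tendsto_atBot {α β : ℝ} (γ : ℝ) (hα : α < 0) :
    Tendsto (fun x : ℝ => α * x ^ 2 + β * x + γ) atTop atBot := by
  have h1 : Tendsto (fun x : ℝ => x * (α * x + β) + γ) atTop atBot := by
    refine tendsto_atBot_add_const_right _ γ ?_
    refine tendsto_id.atTop_mul_atBot₀ ?_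
    exact tendsto_atBot_add_const_right _ β (tendsto_id.const_mul_atTop_of_neg hα)
  refine h1.congr fun x => by ring

lemma lin_tendsto_atTop {β : ℝ} (γ : ℝ) (hβ : 0 < β) :
    Tendsto (fun x : ℝ => β * x + γ) atTop atTop :=
  tendsto_atTop_add_const_right _ γ (tendsto_id.const_mul_atTop hβ)

lemma lin_tendsto_atBot {β : ℝ} (γ : ℝ) (hβ : β < 0) :
    Tendsto (fun x : ℝ => β * x + γ) atTop atBot :=
  tendsto_atBot_add_const_right _ γ (tendsto_id.const_mul_atTop_of_neg hβ)

-- ratio of gaussian densities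
lemma gauss_ratio (m n s w : ℝ) (hs : 0 < s) (hw : 0 < w) (x : ℝ) :
    gaussianPDFReal n ⟨w ^ 2, sq_nonneg w⟩ x / gaussianPDFReal m ⟨s ^ 2, sq_nonneg s⟩ x
      = (s / w) * Real.exp ((1 / (2 * s ^ 2) - 1 / (2 * w ^ 2)) * x ^ 2
          + (n / w ^ 2 - m / s ^ 2) * x + (m ^ 2 / (2 * s ^ 2) - n ^ 2 / (2 * w ^ 2))) := by
  unfold gaussianPDFReal
  show (Real.sqrt (2 * π * w ^ 2))⁻¹ * Real.exp (-(x - n) ^ 2 / (2 * w ^ 2))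
    / ((Real.sqrt (2 * π * s ^ 2))⁻¹ * Real.exp (-(x - m) ^ 2 / (2 * s ^ 2))) = _
  have h2π : (0:ℝ) < 2 * π := by positivity
  have hsq : ∀ u : ℝ, 0 < u → Real.sqrt (2 * π * u ^ 2) = Real.sqrt (2 * π) * u := by
    intro u hu
    rw [Real.sqrt_mul h2π.le, Real.sqrt_sq hu.le]
  rw [hsq w hw, hsq s hs]
  have hsqrtπ : (0:ℝ) < Real.sqrt (2 * π) := Real.sqrt_pos.2 h2π
  have hexp : Real.exp (-(x - n) ^ 2 / (2 * w ^ 2)) / Real.exp (-(x - m) ^ 2 / (2 * s ^ 2))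
      = Real.exp ((1 / (2 * s ^ 2) - 1 / (2 * w ^ 2)) * x ^ 2
          + (n / w ^ 2 - m / s ^ 2) * x + (m ^ 2 / (2 * s ^ 2) - n ^ 2 / (2 * w ^ 2))) := by
    rw [← Real.exp_sub]
    congr 1
    field_simp
    ring
  rw [← hexp]
  have e1 := (Real.exp_pos (-(x - n) ^ 2 / (2 * w ^ 2))).ne'
  have e2 := (Real.exp_pos (-(x - m) ^ 2 / (2 * s ^ 2))).ne'
  field_simp

lemma flow_affine {f : ℝ → ℝ} (hbij : Function.Bijective f)
    (hmono : StrictMono f ∨ StrictAnti f)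
    {μ₁ σ₁ μ σ : ℝ} (hσ₁ : 0 < σ₁) (hσ : 0 < σ)
    (h : Measure.map (Function.invFun f) (gauss μ₁ σ₁) = gauss μ σ) :
    ∃ r c : ℝ, r ≠ 0 ∧ f = fun t => r * t + c := by
  set g := Function.invFun f with hg
  have hgl : Function.LeftInverse g f := Function.leftInverse_invFun hbij.1
  have hgr : Function.RightInverse g f := Function.rightInverse_invFun hbij.2
  rcases hmono with hm | hm
  · -- increasing case
    have hgm : Monotone g := by
      intro x y hxy
      by_contra hc
      push_neg at hc
      have := hm hc
      rw [hgr x, hgr y] at this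
      exact absurd hxy (not_le.2 this)
    have hkey : ∀ t, gauss μ₁ σ₁ (Set.Iic (f t)) = gauss μ σ (Set.Iic t) := by
      intro t
      rw [← h, Measure.map_apply hgm.measurable measurableSet_Iic]
      congr 1
      ext y
      simp only [Set.mem_preimage, Set.mem_Iic]
      constructor
      · intro hy
        calc g y ≤ g (f t) := hgm hy
          _ = t := hgl t
      · intro hy
        calc y = f (g y) := (hgr y).symm
          _ ≤ f t := hm.monotone hy
    refine ⟨σ₁ / σ, μ₁ - σ₁ / σ * μ, div_ne_zero hσ₁.ne' hσ.ne', funext fun t => ?_⟩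
    have := hkey t
    rw [gauss_Iic _ _ _ hσ₁, gauss_Iic _ _ _ hσ] at this
    have h2 := gauss_cdf_injective this
    field_simp at h2 ⊢
    nlinarith [h2, hσ.ne']
  · -- decreasing case
    have hgm : Antitone g := by
      intro x y hxy
      by_contra hc
      push_neg at hc
      have := hm hc
      rw [hgr x, hgr y] at this
      exact absurd hxy (not_le.2 this)
    have hkey : ∀ t, gauss μ₁ σ₁ (Set.Ici (f t)) = gauss μ σ (Set.Iic t) := by
      intro t
      rw [← h, Measure.map_apply hgm.measurable measurableSet_Iic]
      congr 1
      ext y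
      simp only [Set.mem_preimage, Set.mem_Iic, Set.mem_Ici]
      constructor
      · intro hy
        calc g y ≤ g (f t) := hgm hy
          _ = t := hgl t
      · intro hy
        calc f t ≤ f (g y) := hm.antitone hy
          _ = y := hgr y
    refine ⟨-(σ₁ / σ), μ₁ + σ₁ / σ * μ, neg_ne_zero.2 (div_ne_zero hσ₁.ne' hσ.ne'),
      funext fun t => ?_⟩
    have := hkey t
    rw [gauss_Ici, gauss_Iic _ _ _ hσ₁, gauss_Iic _ _ _ hσ] at this
    have h2 := gauss_cdf_injective this
    field_simp at h2 ⊢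
    nlinarith [h2, hσ.ne']

-- pointwise density identity from the measure identity
lemma mixture_density (a μ₁ μ₂ σ₁ σ₂ m s : ℝ)
    (ha0 : 0 < a) (ha1 : a < 1) (hσ₁ : 0 < σ₁) (hσ₂ : 0 < σ₂) (hs : 0 < s)
    (heq : ENNReal.ofReal a • gauss μ₁ σ₁ + ENNReal.ofReal (1 - a) • gauss μ₂ σ₂
      = gauss m s) :
    ∀ x, a * gaussianPDFReal μ₁ ⟨σ₁ ^ 2, sq_nonneg σ₁⟩ x
        + (1 - a) * gaussianPDFReal μ₂ ⟨σ₂ ^ 2, sq_nonneg σ₂⟩ x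
        = gaussianPDFReal m ⟨s ^ 2, sq_nonneg s⟩ x := by
  have hcont : ∀ (c : ℝ) (v : NNReal), Continuous (gaussianPDFReal c v) := by
    intro c v
    rw [gaussianPDFReal_def]
    fun_prop
  rw [gauss, gauss, gauss, gaussianReal_of_var_ne_zero _ (gauss_var_ne hσ₁),
    gaussianReal_of_var_ne_zero _ (gauss_var_ne hσ₂),
    gaussianReal_of_var_ne_zero _ (gauss_var_ne hs),
    ← withDensity_smul _ (measurable_gaussianPDF μ₁ ⟨σ₁ ^ 2, sq_nonneg σ₁⟩),
    ← withDensity_smul _ (measurable_gaussianPDF μ₂ ⟨σ₂ ^ 2, sq_nonneg σ₂⟩),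
    ← withDensity_add_left (((measurable_gaussianPDF μ₁ ⟨σ₁ ^ 2, sq_nonneg σ₁⟩).const_smul
      (ENNReal.ofReal a)))] at heq
  have hae := (withDensity_eq_iff_of_sigmaFinite
    ((((measurable_gaussianPDF _ _).const_smul _).add
      ((measurable_gaussianPDF _ _).const_smul _)).aemeasurable)
    (measurable_gaussianPDF _ _).aemeasurable).mp heq
  have hae2 : (fun x => ENNReal.ofReal (a * gaussianPDFReal μ₁ ⟨σ₁ ^ 2, sq_nonneg σ₁⟩ x
        + (1 - a) * gaussianPDFReal μ₂ ⟨σ₂ ^ 2, sq_nonneg σ₂⟩ x))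
      =ᵐ[volume] (fun x => ENNReal.ofReal (gaussianPDFReal m ⟨s ^ 2, sq_nonneg s⟩ x)) := by
    refine Filter.EventuallyEq.trans ?_ hae
    refine Eventually.of_forall fun x => ?_
    simp only [Pi.add_apply, Pi.smul_apply, smul_eq_mul, gaussianPDF]
    rw [ENNReal.ofReal_add (mul_nonneg ha0.le (gaussianPDFReal_nonneg μ₁ ⟨σ₁ ^ 2, sq_nonneg σ₁⟩ x))
        (mul_nonneg (by linarith) (gaussianPDFReal_nonneg μ₂ ⟨σ₂ ^ 2, sq_nonneg σ₂⟩ x)),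
      ENNReal.ofReal_mul ha0.le, ENNReal.ofReal_mul (by linarith)]
  have heq2 := (Continuous.ae_eq_iff_eq volume
    (ENNReal.continuous_ofReal.comp (by continuity))
    (ENNReal.continuous_ofReal.comp (hcont m _))).mp hae2
  intro x
  have := congrFun heq2 x
  simp only [Function.comp_apply] at this
  rw [ENNReal.ofReal_eq_ofReal_iff
    (add_nonneg (mul_nonneg ha0.le (gaussianPDFReal_nonneg μ₁ ⟨σ₁ ^ 2, sq_nonneg σ₁⟩ x))
      (mul_nonneg (by linarith) (gaussianPDFReal_nonneg μ₂ ⟨σ₂ ^ 2, sq_nonneg σ₂⟩ x)))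
    (gaussianPDFReal_nonneg m ⟨s ^ 2, sq_nonneg s⟩ x)] at this
  exact this

-- a ratio of gaussian densities tends to 0 when variance of numerator smaller,
-- or mean smaller with equal variance
lemma ratio_tendsto_zero (m n s w : ℝ) (hs : 0 < s) (hw : 0 < w)
    (h : w < s ∨ (w = s ∧ n < m)) :
    Tendsto (fun x => gaussianPDFReal n ⟨w ^ 2, sq_nonneg w⟩ x
      / gaussianPDFReal m ⟨s ^ 2, sq_nonneg s⟩ x) atTop (nhds 0) := by
  have hcongr := fun x => (gauss_ratio m n s w hs hw x).symm
  refine Tendsto.congr hcongr ?_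
  have hexp : Tendsto (fun x : ℝ => Real.exp ((1 / (2 * s ^ 2) - 1 / (2 * w ^ 2)) * x ^ 2
      + (n / w ^ 2 - m / s ^ 2) * x + (m ^ 2 / (2 * s ^ 2) - n ^ 2 / (2 * w ^ 2))))
      atTop (nhds 0) := by
    rcases h with h | ⟨hws, hnm⟩
    · refine tendsto_exp_atBot.comp (quad_tendsto_atBot _ ?_)
      have h1 : s ^ 2 > w ^ 2 := by nlinarith
      have : 1 / (2 * s ^ 2) < 1 / (2 * w ^ 2) := by
        apply one_div_lt_one_div_of_lt <;> nlinarith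
      linarith
    · have hz : (1 / (2 * s ^ 2) - 1 / (2 * w ^ 2)) = 0 := by rw [hws]; ring
      have hβ : n / w ^ 2 - m / s ^ 2 < 0 := by
        rw [hws]
        have := (div_lt_div_iff_of_pos_right (show (0:ℝ) < s ^ 2 by positivity)).2 hnm
        linarith
      refine tendsto_exp_atBot.comp ?_
      have hlin : Tendsto (fun x : ℝ => (n / w ^ 2 - m / s ^ 2) * x
          + (m ^ 2 / (2 * s ^ 2) - n ^ 2 / (2 * w ^ 2))) atTop atBot :=
        tendsto_atBot_add_const_right _ _ (tendsto_id.const_mul_atTop_of_neg hβ)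
      refine hlin.congr fun x => by rw [hz]; ring
  have := hexp.const_mul (s / w)
  rwa [mul_zero] at this

lemma ratio_tendsto_atTop (m n s w : ℝ) (hs : 0 < s) (hw : 0 < w)
    (h : s < w ∨ (w = s ∧ m < n)) :
    Tendsto (fun x => gaussianPDFReal n ⟨w ^ 2, sq_nonneg w⟩ x
      / gaussianPDFReal m ⟨s ^ 2, sq_nonneg s⟩ x) atTop atTop := by
  have hcongr := fun x => (gauss_ratio m n s w hs hw x).symm
  refine Tendsto.congr hcongr ?_
  have hexp : Tendsto (fun x : ℝ => Real.exp ((1 / (2 * s ^ 2) - 1 / (2 * w ^ 2)) * x ^ 2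
      + (n / w ^ 2 - m / s ^ 2) * x + (m ^ 2 / (2 * s ^ 2) - n ^ 2 / (2 * w ^ 2))))
      atTop atTop := by
    rcases h with h | ⟨hws, hnm⟩
    · refine tendsto_exp_atTop.comp (quad_tendsto_atTop _ ?_)
      have : 1 / (2 * w ^ 2) < 1 / (2 * s ^ 2) := by
        apply one_div_lt_one_div_of_lt <;> nlinarith
      linarith
    · have hz : (1 / (2 * s ^ 2) - 1 / (2 * w ^ 2)) = 0 := by rw [hws]; ring
      have hβ : 0 < n / w ^ 2 - m / s ^ 2 := by
        rw [hws]
        have := (div_lt_div_iff_of_pos_right (show (0:ℝ) < s ^ 2 by positivity)).2 hnm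
        linarith
      refine tendsto_exp_atTop.comp ?_
      have hlin : Tendsto (fun x : ℝ => (n / w ^ 2 - m / s ^ 2) * x
          + (m ^ 2 / (2 * s ^ 2) - n ^ 2 / (2 * w ^ 2))) atTop atTop :=
        tendsto_atTop_add_const_right _ _ (tendsto_id.const_mul_atTop hβ)
      refine hlin.congr fun x => by rw [hz]; ring
  exact hexp.const_mul_atTop (by positivity)

lemma mixture_ne_gauss (a μ₁ μ₂ σ₁ σ₂ m s : ℝ)
    (ha0 : 0 < a) (ha1 : a < 1) (hσ₁ : 0 < σ₁) (hσ₂ : 0 < σ₂) (hσ : σ₂ < σ₁) (hs : 0 < s) :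
    ENNReal.ofReal a • gauss μ₁ σ₁ + ENNReal.ofReal (1 - a) • gauss μ₂ σ₂ ≠ gauss m s := by
  intro heq
  have hd := mixture_density a μ₁ μ₂ σ₁ σ₂ m s ha0 ha1 hσ₁ hσ₂ hs heq
  set P₁ := gaussianPDFReal μ₁ ⟨σ₁ ^ 2, sq_nonneg σ₁⟩ with hP₁
  set P₂ := gaussianPDFReal μ₂ ⟨σ₂ ^ 2, sq_nonneg σ₂⟩ with hP₂
  set P := gaussianPDFReal m ⟨s ^ 2, sq_nonneg s⟩ with hP
  have hpos : ∀ x, 0 < P₁ x := fun x => gaussianPDFReal_pos _ _ _ (gauss_var_ne hσ₁)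
  have hkey : ∀ x, P x / P₁ x = a + (1 - a) * (P₂ x / P₁ x) := by
    intro x
    have hne := (hpos x).ne'
    rw [← hd x]
    field_simp
  have h2 : Tendsto (fun x => P₂ x / P₁ x) atTop (nhds 0) :=
    ratio_tendsto_zero μ₁ μ₂ σ₁ σ₂ hσ₁ hσ₂ (Or.inl hσ)
  have hR : Tendsto (fun x => P x / P₁ x) atTop (nhds a) := by
    have := (tendsto_const_nhds (x := a) (f := atTop)).add (h2.const_mul (1 - a))
    rw [mul_zero, add_zero] at this
    exact this.congr fun x => (hkey x).symm
  rcases lt_trichotomy s σ₁ with hlt | heqs | hgt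
  · have h0 : Tendsto (fun x => P x / P₁ x) atTop (nhds 0) :=
      ratio_tendsto_zero μ₁ m σ₁ s hσ₁ hs (Or.inl hlt)
    exact absurd (tendsto_nhds_unique hR h0) ha0.ne'
  · rcases lt_trichotomy m μ₁ with hm | hm | hm
    · have h0 : Tendsto (fun x => P x / P₁ x) atTop (nhds 0) :=
        ratio_tendsto_zero μ₁ m σ₁ s hσ₁ hs (Or.inr ⟨heqs, hm⟩)
      exact absurd (tendsto_nhds_unique hR h0) ha0.ne'
    · -- m = μ₁, s = σ₁ : ratio ≡ 1
      have hident : ∀ x, P x / P₁ x = 1 := by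
        intro x
        rw [hP, hP₁, hm, heqs, div_self (hpos x).ne']
      have h1 : Tendsto (fun x => P x / P₁ x) atTop (nhds 1) :=
        tendsto_const_nhds.congr fun x => (hident x).symm
      have := tendsto_nhds_unique hR h1
      linarith
    · have hT : Tendsto (fun x => P x / P₁ x) atTop atTop :=
        ratio_tendsto_atTop μ₁ m σ₁ s hσ₁ hs (Or.inr ⟨heqs, hm⟩)
      exact not_tendsto_nhds_of_tendsto_atTop hT a hR
  · have hT : Tendsto (fun x => P x / P₁ x) atTop atTop :=
      ratio_tendsto_atTop μ₁ m σ₁ s hσ₁ hs (Or.inl hgt)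
    exact not_tendsto_nhds_of_tendsto_atTop hT a hR

end Aux

theorem stmt1 (a μ₀ μ₁ μ₂ σ₀ σ₁ σ₂ : ℝ)
    (ha : a ∈ Set.Ioo (0 : ℝ) 1)
    (hσ₀ : 0 < σ₀) (hσ₁ : 0 < σ₁) (hσ₂ : 0 < σ₂)
    (hσ : σ₁ > σ₂)
    (f : ℝ → ℝ) (hf : IsAdmissibleFlow f)
    (hpush : Measure.map f (gauss μ₀ σ₀)
      = ENNReal.ofReal a • gauss μ₁ σ₁ + ENNReal.ofReal (1 - a) • gauss μ₂ σ₂) :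
    ¬ ∃ (μ : ℝ) (σ : ℝ), 0 < σ ∧
        Measure.map (Function.invFun f) (gauss μ₁ σ₁) = gauss μ σ := by
  rintro ⟨μ, σ, hσpos, hmap⟩
  have hmono := flow_mono hf
  obtain ⟨r, c, hr, hfa⟩ := flow_affine hf.1 hmono hσ₁ hσpos hmap
  rw [hfa, gauss_map_affine] at hpush
  exact mixture_ne_gauss a μ₁ μ₂ σ₁ σ₂ _ _ ha.1 ha.2 hσ₁ hσ₂ hσ
    (mul_pos (abs_pos.2 hr) hσ₀) hpush.symm
end

section
/- Let a ∈ (0,1), let μ₀, μ₁, μ₂ ∈ ℝ and σ₀, σ > 0 with μ₁ ≠ μ₂, and let f : ℝ → ℝ be an admissible flow such that the pushforward of N(μ₀, σ₀²) under f equals the equal-variance mixture a·N(μ₁, σ²) + (1−a)·N(μ₂, σ²). Then for each i ∈ {1, 2}, the pushforward of N(μᵢ, σ²) under f⁻¹ is not a Gaussian measure: there are no ν ∈ ℝ and ρ > 0 with (f⁻¹)_* N(μᵢ, σ²) = N(ν, ρ²). -/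
open MeasureTheory ProbabilityTheory

open Real Function Set
open scoped NNReal ENNReal

-- Step: abstract functional-equation contradiction
lemma coshKey {P Q k β : ℝ} (hP : 0 < P) (hQ : 0 < Q) (hk : k ≠ 0)
    (H : ∀ x : ℝ, P + Q * (rexp (k * x) + rexp (-(k * x))) = (P + 2 * Q) * rexp (β * x ^ 2)) :
    False := by
  rcases le_or_gt β 0 with hβ | hβ
  · have h1 := H (1 / k)
    rw [mul_one_div, div_self hk] at h1
    have he1 : (2:ℝ) < rexp 1 + rexp (-1) := by
      have := Real.add_one_lt_exp (x := 1) one_ne_zero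
      have h2 := Real.exp_pos (-1)
      linarith
    have hle : (P + 2 * Q) * rexp (β * (1/k) ^ 2) ≤ P + 2 * Q := by
      have : rexp (β * (1/k)^2) ≤ 1 := by
        rw [Real.exp_le_one_iff]
        have : (0:ℝ) ≤ (1/k)^2 := sq_nonneg _
        nlinarith
      nlinarith
    nlinarith
  · set x := (|k| + 1) / β with hx
    have hx0 : 0 < x := by positivity
    have hβx : β * x ^ 2 = (|k| + 1) * x := by
      field_simp [hx]
      rw [hx, mul_div_assoc', mul_div_right_comm, div_self hβ.ne', one_mul, add_comm]
    have h1 := H x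
    rw [hβx] at h1
    have hkx : rexp (k * x) ≤ rexp (|k| * x) := by
      apply Real.exp_le_exp.2
      nlinarith [le_abs_self k]
    have hkx' : rexp (-(k * x)) ≤ rexp (|k| * x) := by
      apply Real.exp_le_exp.2
      nlinarith [neg_abs_le k]
    have hsplit : rexp ((|k| + 1) * x) = rexp (|k| * x) * rexp x := by
      rw [← Real.exp_add]; ring_nf
    have h2 : 1 < rexp x := Real.one_lt_exp_iff.2 hx0
    have h3 : 0 < rexp (|k| * x) := Real.exp_pos _
    have h4 : 1 ≤ rexp (|k| * x) := by
      rw [← Real.exp_zero]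
      apply Real.exp_le_exp.2
      positivity
    rw [hsplit] at h1
    nlinarith [mul_le_mul_of_nonneg_left h2.le hP.le, mul_pos h3 (sub_pos.2 h2)]

lemma densKey {a b c C s V u w : ℝ} (ha : 0 < a) (hb : 0 < b) (hc : 0 < c) (hC : 0 < C)
    (hs : 0 < s) (hV : 0 < V) (huw : u ≠ w)
    (h : ∀ x : ℝ, a * (c * rexp (-(x - u) ^ 2 / (2 * s))) + b * (c * rexp (-(x - w) ^ 2 / (2 * s)))
      = C * rexp (-x ^ 2 / (2 * V))) : False := by
  have hs' : s ≠ 0 := hs.ne'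
  have hV' : V ≠ 0 := hV.ne'
  have hc' : c ≠ 0 := hc.ne'
  set k : ℝ := (w - u) / s with hk_def
  set P : ℝ := a ^ 2 * rexp (-u ^ 2 / s) + b ^ 2 * rexp (-w ^ 2 / s) with hP_def
  set Q : ℝ := a * b * rexp (-(u ^ 2 + w ^ 2) / (2 * s)) with hQ_def
  set β : ℝ := 1 / s - 1 / V with hβ_def
  set R : ℝ := C ^ 2 / c ^ 2 with hR_def
  have H' : ∀ x : ℝ, P + Q * (rexp (k * x) + rexp (-(k * x))) = R * rexp (β * x ^ 2) := by
    intro x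
    have t11 : rexp (-(x - u) ^ 2 / (2 * s)) * rexp (-(-x - u) ^ 2 / (2 * s))
        = rexp (-u ^ 2 / s) * rexp (-x ^ 2 / s) := by
      rw [← Real.exp_add, ← Real.exp_add]; congr 1; field_simp; ring
    have t22 : rexp (-(x - w) ^ 2 / (2 * s)) * rexp (-(-x - w) ^ 2 / (2 * s))
        = rexp (-w ^ 2 / s) * rexp (-x ^ 2 / s) := by
      rw [← Real.exp_add, ← Real.exp_add]; congr 1; field_simp; ring
    have t12 : rexp (-(x - u) ^ 2 / (2 * s)) * rexp (-(-x - w) ^ 2 / (2 * s))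
        = rexp (-(u ^ 2 + w ^ 2) / (2 * s)) * (rexp (-(k * x)) * rexp (-x ^ 2 / s)) := by
      rw [← Real.exp_add, ← Real.exp_add, ← Real.exp_add]; congr 1
      rw [hk_def]; field_simp; ring
    have t21 : rexp (-(x - w) ^ 2 / (2 * s)) * rexp (-(-x - u) ^ 2 / (2 * s))
        = rexp (-(u ^ 2 + w ^ 2) / (2 * s)) * (rexp (k * x) * rexp (-x ^ 2 / s)) := by
      rw [← Real.exp_add, ← Real.exp_add, ← Real.exp_add]; congr 1
      rw [hk_def]; field_simp; ring
    have tR : rexp (-x ^ 2 / (2 * V)) * rexp (-(-x) ^ 2 / (2 * V))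
        = rexp (β * x ^ 2) * rexp (-x ^ 2 / s) := by
      rw [← Real.exp_add, ← Real.exp_add]; congr 1
      rw [hβ_def]; field_simp; ring
    have hfac : (c ^ 2 * rexp (-x ^ 2 / s)) ≠ 0 := by positivity
    apply mul_right_cancel₀ hfac
    calc (P + Q * (rexp (k * x) + rexp (-(k * x)))) * (c ^ 2 * rexp (-x ^ 2 / s))
        = a ^ 2 * c ^ 2 * (rexp (-u ^ 2 / s) * rexp (-x ^ 2 / s))
          + b ^ 2 * c ^ 2 * (rexp (-w ^ 2 / s) * rexp (-x ^ 2 / s))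
          + a * b * c ^ 2 * (rexp (-(u ^ 2 + w ^ 2) / (2 * s)) * (rexp (-(k * x)) * rexp (-x ^ 2 / s)))
          + a * b * c ^ 2 * (rexp (-(u ^ 2 + w ^ 2) / (2 * s)) * (rexp (k * x) * rexp (-x ^ 2 / s))) := by
          rw [hP_def, hQ_def]; ring
      _ = (a * (c * rexp (-(x - u) ^ 2 / (2 * s))) + b * (c * rexp (-(x - w) ^ 2 / (2 * s))))
          * (a * (c * rexp (-(-x - u) ^ 2 / (2 * s))) + b * (c * rexp (-(-x - w) ^ 2 / (2 * s)))) := by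
          rw [← t11, ← t22, ← t12, ← t21]; ring
      _ = (C * rexp (-x ^ 2 / (2 * V))) * (C * rexp (-(-x) ^ 2 / (2 * V))) := by rw [h x, h (-x)]
      _ = R * rexp (β * x ^ 2) * (c ^ 2 * rexp (-x ^ 2 / s)) := by
          rw [hR_def]
          rw [show (C * rexp (-x ^ 2 / (2 * V))) * (C * rexp (-(-x) ^ 2 / (2 * V)))
            = C ^ 2 * (rexp (-x ^ 2 / (2 * V)) * rexp (-(-x) ^ 2 / (2 * V))) by ring, tR]
          field_simp
  have h0 := H' 0
  simp only [mul_zero, neg_zero, Real.exp_zero, ne_eq, OfNat.ofNat_ne_zero,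
    not_false_eq_true, zero_pow, mul_one] at h0
  -- h0 : P + Q * (1 + 1) = R
  have hR : R = P + 2 * Q := by linarith
  have hP : 0 < P := by positivity
  have hQ : 0 < Q := by positivity
  have hk : k ≠ 0 := by
    rw [hk_def]
    exact div_ne_zero (sub_ne_zero.2 (Ne.symm huw)) hs'
  exact coshKey hP hQ hk (fun x => by rw [H' x, hR])

lemma var_ne_zero {s : ℝ} (hs : 0 < s) : (⟨s ^ 2, sq_nonneg s⟩ : ℝ≥0) ≠ 0 := by
  intro h
  have := congrArg NNReal.toReal h
  change s ^ 2 = 0 at this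
  nlinarith

lemma continuous_gaussianPDFReal (μ : ℝ) (v : ℝ≥0) : Continuous (gaussianPDFReal μ v) := by
  rw [gaussianPDFReal_def]
  fun_prop

lemma densKey' : True := trivial

lemma mixNeGauss {a b μA μB σ M T : ℝ} (ha : 0 < a) (hb : 0 < b) (hAB : μA ≠ μB)
    (hσ : 0 < σ) (hT : 0 < T) :
    ENNReal.ofReal a • gauss μA σ + ENNReal.ofReal b • gauss μB σ ≠ gauss M T := by
  intro hEq
  set vσ : ℝ≥0 := ⟨σ ^ 2, sq_nonneg σ⟩ with hvσ
  set vT : ℝ≥0 := ⟨T ^ 2, sq_nonneg T⟩ with hvT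
  have hvσ0 : vσ ≠ 0 := var_ne_zero hσ
  have hvT0 : vT ≠ 0 := var_ne_zero hT
  simp only [gauss, ← hvσ, ← hvT] at hEq
  rw [gaussianReal_of_var_ne_zero μA hvσ0, gaussianReal_of_var_ne_zero μB hvσ0,
    gaussianReal_of_var_ne_zero M hvT0] at hEq
  rw [← withDensity_smul _ (measurable_gaussianPDF μA vσ),
    ← withDensity_smul _ (measurable_gaussianPDF μB vσ),
    ← withDensity_add_left ((measurable_gaussianPDF μA vσ).const_smul (ENNReal.ofReal a))] at hEq
  have hmeas1 : Measurable (ENNReal.ofReal a • gaussianPDF μA vσ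
      + ENNReal.ofReal b • gaussianPDF μB vσ) :=
    ((measurable_gaussianPDF μA vσ).const_smul _).add ((measurable_gaussianPDF μB vσ).const_smul _)
  have hae := (withDensity_eq_iff_of_sigmaFinite hmeas1.aemeasurable
    (measurable_gaussianPDF M vT).aemeasurable).mp hEq
  -- convert to real-valued a.e. equality
  have haeR : ∀ᵐ x ∂(volume : Measure ℝ),
      a * gaussianPDFReal μA vσ x + b * gaussianPDFReal μB vσ x = gaussianPDFReal M vT x := by
    filter_upwards [hae] with x hx
    simp only [Pi.add_apply, Pi.smul_apply, smul_eq_mul, gaussianPDF] at hx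
    rw [← ENNReal.ofReal_mul ha.le, ← ENNReal.ofReal_mul hb.le, ← ENNReal.ofReal_add
      (mul_nonneg ha.le (gaussianPDFReal_nonneg μA vσ x))
      (mul_nonneg hb.le (gaussianPDFReal_nonneg μB vσ x))] at hx
    have h1 : 0 ≤ a * gaussianPDFReal μA vσ x + b * gaussianPDFReal μB vσ x := by
      have := gaussianPDFReal_nonneg μA vσ x
      have := gaussianPDFReal_nonneg μB vσ x
      positivity
    exact (ENNReal.ofReal_eq_ofReal_iff h1 (gaussianPDFReal_nonneg M vT x)).mp hx
  have hcont1 : Continuous (fun x => a * gaussianPDFReal μA vσ x + b * gaussianPDFReal μB vσ x) :=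
    ((continuous_gaussianPDFReal μA vσ).const_smul a).add
      ((continuous_gaussianPDFReal μB vσ).const_smul b)
  have hpt : ∀ x : ℝ, a * gaussianPDFReal μA vσ x + b * gaussianPDFReal μB vσ x
      = gaussianPDFReal M vT x :=
    fun x => congrFun ((hcont1.ae_eq_iff_eq volume (continuous_gaussianPDFReal M vT)).mp haeR) x
  -- contradiction via densKey
  have hcσ : (0:ℝ) < (√(2 * π * σ ^ 2))⁻¹ := by
    rw [inv_pos]
    exact Real.sqrt_pos.2 (by positivity)
  have hcT : (0:ℝ) < (√(2 * π * T ^ 2))⁻¹ := by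
    rw [inv_pos]
    exact Real.sqrt_pos.2 (by positivity)
  refine densKey (a := a) (b := b) (c := (√(2 * π * σ ^ 2))⁻¹) (C := (√(2 * π * T ^ 2))⁻¹)
    (s := σ ^ 2) (V := T ^ 2) (u := μA - M) (w := μB - M) ha hb hcσ hcT (by positivity)
    (by positivity) (by intro h; exact hAB (by linarith)) ?_
  intro x
  have hx := hpt (M + x)
  simp only [gaussianPDFReal, NNReal.coe_mk] at hx
  rw [show M + x - μA = x - (μA - M) by ring, show M + x - μB = x - (μB - M) by ring,
    show M + x - M = x by ring] at hx
  exact hx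

instance gauss_prob (m s : ℝ) : IsProbabilityMeasure (gauss m s) := by
  unfold gauss; exact instIsProbabilityMeasureGaussianReal m _

lemma map_affine (p q m s : ℝ) :
    Measure.map (fun x => p * x + q) (gauss m s) = gauss (p * m + q) (|p| * s) := by
  have h1 : (fun x : ℝ => p * x + q) = (fun x : ℝ => x + q) ∘ (fun x : ℝ => p * x) := rfl
  rw [h1, ← Measure.map_map (measurable_add_const q) (measurable_const_mul p)]
  rw [gauss, show (fun x : ℝ => p * x) = (p * ·) by rfl, gaussianReal_map_const_mul (μ := m) (v := ⟨s ^ 2, sq_nonneg s⟩) p,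
    show (fun x : ℝ => x + q) = (· + q) by rfl, gaussianReal_map_add_const q, gauss]
  congr 1
  apply NNReal.coe_injective
  push_cast
  show (p ^ 2 * s ^ 2 : ℝ) = (|p| * s) ^ 2
  rw [mul_pow, sq_abs]

lemma gauss_Iic_lt {t t' : ℝ} (h : t < t') : gauss 0 1 (Iic t) < gauss 0 1 (Iic t') := by
  have hv : (⟨(1:ℝ) ^ 2, sq_nonneg 1⟩ : ℝ≥0) ≠ 0 := var_ne_zero one_pos
  have hpos : 0 < gauss 0 1 (Ioc t t') := by
    rw [gauss, gaussianReal_apply 0 hv]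
    rw [pos_iff_ne_zero]
    intro h0
    rw [setLIntegral_eq_zero_iff measurableSet_Ioc (measurable_gaussianPDF 0 ⟨(1:ℝ) ^ 2, sq_nonneg 1⟩)] at h0
    have h2 := ae_iff.mp h0
    have h1 : {x : ℝ | ¬ (x ∈ Ioc t t' → gaussianPDF 0 ⟨(1:ℝ) ^ 2, sq_nonneg 1⟩ x = 0)}
        = Ioc t t' := by
      ext x
      simp only [mem_setOf_eq, Classical.not_imp]
      exact ⟨fun hx => hx.1, fun hx => ⟨hx, (gaussianPDF_pos 0 hv x).ne'⟩⟩
    rw [h1, Real.volume_Ioc] at h2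
    exact (ENNReal.ofReal_pos.2 (by linarith)).ne' h2
  have hunion : Iic t' = Iic t ∪ Ioc t t' := (Set.Iic_union_Ioc_eq_Iic h.le).symm
  rw [hunion, measure_union (Set.Iic_disjoint_Ioc le_rfl) measurableSet_Ioc]
  exact ENNReal.lt_add_right (measure_ne_top _ _) hpos.ne'

lemma gauss_Iic_inj {A B : ℝ} (h : gauss 0 1 (Iic A) = gauss 0 1 (Iic B)) : A = B := by
  rcases lt_trichotomy A B with hlt | he | hgt
  · exact absurd h (gauss_Iic_lt hlt).ne
  · exact he
  · exact absurd h.symm (gauss_Iic_lt hgt).ne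

lemma gauss_Iic_eq {m s : ℝ} (hs : 0 < s) (t : ℝ) :
    gauss m s (Iic t) = gauss 0 1 (Iic ((t - m) / s)) := by
  have hmap : gauss m s = Measure.map (fun x => s * x + m) (gauss 0 1) := by
    rw [map_affine, mul_zero, zero_add, abs_of_pos hs, mul_one]
  rw [hmap, Measure.map_apply (by fun_prop) measurableSet_Iic]
  congr 1
  ext y
  simp only [Set.mem_preimage, Set.mem_Iic]
  rw [le_div_iff₀ hs]
  constructor <;> intro <;> nlinarith

lemma gauss_Ici_eq {m s : ℝ} (hs : 0 < s) (t : ℝ) :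
    gauss m s (Ici t) = gauss 0 1 (Iic ((m - t) / s)) := by
  have hneg : Measure.map (fun x : ℝ => (-1) * x + 0) (gauss m s) = gauss (-m) s := by
    rw [map_affine]
    norm_num
  have : gauss (-m) s (Iic (-t)) = gauss m s (Ici t) := by
    rw [← hneg, Measure.map_apply (by fun_prop) measurableSet_Iic]
    congr 1
    ext y
    simp only [Set.mem_preimage, Set.mem_Iic, Set.mem_Ici]
    constructor <;> intro <;> linarith
  rw [← this, gauss_Iic_eq hs]
  congr 2
  ring


lemma affine_of_push {f : ℝ → ℝ} (hfc : Continuous f) (hfb : Bijective f)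
    {ν ρ m σ : ℝ} (hρ : 0 < ρ) (hσ : 0 < σ)
    (h : Measure.map f (gauss ν ρ) = gauss m σ) :
    ∃ p q : ℝ, p ≠ 0 ∧ f = fun x => p * x + q := by
  have hmeas : Measurable f := hfc.measurable
  rcases hfc.strictMono_of_inj hfb.1 with hm | hm
  · refine ⟨σ / ρ, m - σ * ν / ρ, by positivity, ?_⟩
    funext x
    have hpre : f ⁻¹' (Iic (f x)) = Iic x := by
      ext y
      simp only [Set.mem_preimage, Set.mem_Iic]
      exact hm.le_iff_le
    have h1 : gauss m σ (Iic (f x)) = gauss ν ρ (Iic x) := by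
      rw [← h, Measure.map_apply hmeas measurableSet_Iic, hpre]
    rw [gauss_Iic_eq hσ, gauss_Iic_eq hρ] at h1
    have h2 := gauss_Iic_inj h1
    have h3 := (div_eq_div_iff hσ.ne' hρ.ne').mp h2
    apply mul_right_cancel₀ hρ.ne'
    have h4 : (σ / ρ * x + (m - σ * ν / ρ)) * ρ = σ * x + (m * ρ - σ * ν) := by
      field_simp
    rw [h4]
    nlinarith [h3]
  · refine ⟨-(σ / ρ), m + σ * ν / ρ, neg_ne_zero.2 (div_ne_zero hσ.ne' hρ.ne'), ?_⟩
    funext x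
    have hpre : f ⁻¹' (Iic (f x)) = Ici x := by
      ext y
      simp only [Set.mem_preimage, Set.mem_Iic, Set.mem_Ici]
      exact (show StrictAnti f from hm).le_iff_ge
    have h1 : gauss m σ (Iic (f x)) = gauss ν ρ (Ici x) := by
      rw [← h, Measure.map_apply hmeas measurableSet_Iic, hpre]
    rw [gauss_Iic_eq hσ, gauss_Ici_eq hρ] at h1
    have h2 := gauss_Iic_inj h1
    have h3 := (div_eq_div_iff hσ.ne' hρ.ne').mp h2
    apply mul_right_cancel₀ hρ.ne'
    have h4 : (-(σ / ρ) * x + (m + σ * ν / ρ)) * ρ = -(σ * x) + (m * ρ + σ * ν) := by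
      field_simp
      try ring
    rw [h4]
    nlinarith [h3]

lemma aux {a b μ₀ μA μB σ₀ σ : ℝ} (ha : 0 < a) (hb : 0 < b)
    (hσ₀ : 0 < σ₀) (hσ : 0 < σ) (hAB : μA ≠ μB) {f : ℝ → ℝ}
    (hfc : Continuous f) (hfb : Bijective f)
    (hpush : Measure.map f (gauss μ₀ σ₀)
      = ENNReal.ofReal a • gauss μA σ + ENNReal.ofReal b • gauss μB σ) :
    ¬ ∃ ν ρ : ℝ, 0 < ρ ∧ Measure.map (invFun f) (gauss μA σ) = gauss ν ρ := by
  rintro ⟨ν, ρ, hρ, hmap⟩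
  have hmeasf : Measurable f := hfc.measurable
  have hri : ∀ y, f (invFun f y) = y := fun y => rightInverse_invFun hfb.2 y
  have hinvm : Measurable (invFun f) := by
    rcases hfc.strictMono_of_inj hfb.1 with hm | hm
    · exact Monotone.measurable (fun x y hxy => hm.le_iff_le.mp (by rw [hri, hri]; exact hxy))
    · exact Antitone.measurable (fun x y hxy => (show StrictAnti f from hm).le_iff_ge.mp (by rw [hri, hri]; exact hxy))
  have hfa : Measure.map f (gauss ν ρ) = gauss μA σ := by
    rw [← hmap, Measure.map_map hmeasf hinvm,
      show f ∘ invFun f = id from funext hri, Measure.map_id]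
  obtain ⟨p, q, hp, hfeq⟩ := affine_of_push hfc hfb hρ hσ hfa
  rw [hfeq, map_affine] at hpush
  exact mixNeGauss ha hb hAB hσ (mul_pos (abs_pos.2 hp) hσ₀) hpush.symm


theorem stmt2 (a μ₀ μ₁ μ₂ σ₀ σ : ℝ)
    (ha : a ∈ Set.Ioo (0 : ℝ) 1)
    (hσ₀ : 0 < σ₀) (hσ : 0 < σ)
    (hμ : μ₁ ≠ μ₂)
    (f : ℝ → ℝ) (hf : IsAdmissibleFlow f)
    (hpush : Measure.map f (gauss μ₀ σ₀)
      = ENNReal.ofReal a • gauss μ₁ σ + ENNReal.ofReal (1 - a) • gauss μ₂ σ) :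
    (¬ ∃ (ν : ℝ) (ρ : ℝ), 0 < ρ ∧
        Measure.map (Function.invFun f) (gauss μ₁ σ) = gauss ν ρ) ∧
    (¬ ∃ (ν : ℝ) (ρ : ℝ), 0 < ρ ∧
        Measure.map (Function.invFun f) (gauss μ₂ σ) = gauss ν ρ) := by
  obtain ⟨hfb, hfc1, _⟩ := hf
  have hfc : Continuous f := hfc1.continuous
  obtain ⟨ha0, ha1⟩ := ha
  constructor
  · exact aux ha0 (by linarith) hσ₀ hσ hμ hfc hfb hpush
  · exact aux (a := 1 - a) (b := a) (by linarith) ha0 hσ₀ hσ hμ.symm hfc hfb (by rw [hpush]; apply add_comm)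
end

section
/- Let a ∈ (0,1), let μ₁, μ₂ ∈ ℝ and σ₁, σ₂ > 0 with (μ₁, σ₁) ≠ (μ₂, σ₂). Then there do not exist an admissible flow f : ℝ → ℝ and Gaussian measures N(ν₀, ρ₀²), N(ν₁, ρ₁²), N(ν₂, ρ₂²) (with ν₀, ν₁, ν₂ ∈ ℝ, ρ₀, ρ₁, ρ₂ > 0) such that f_* N(ν₀, ρ₀²) = a·N(μ₁, σ₁²) + (1−a)·N(μ₂, σ₂²) and simultaneously f_* N(νᵢ, ρᵢ²) = N(μᵢ, σᵢ²) for both i = 1 and i = 2. In other words, no single one-to-one flow transformation can map Gaussian base distributions exactly onto a two-component Gaussian mixture and onto each of its components at the same time. -/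
open MeasureTheory ProbabilityTheory Real Filter
open scoped NNReal ENNReal

lemma exp_mul_gaussianPDFReal' (m : ℝ) (v : ℝ≥0) (hv : v ≠ 0) (t x : ℝ) :
    Real.exp (t * x) * gaussianPDFReal m v x
      = Real.exp (m * t + v * t ^ 2 / 2) * gaussianPDFReal (m + v * t) v x := by
  have hv' : (v : ℝ) ≠ 0 := by exact_mod_cast hv
  simp only [gaussianPDFReal]
  rw [mul_left_comm, mul_left_comm (Real.exp (m * t + v * t ^ 2 / 2)), ← Real.exp_add,
    ← Real.exp_add]
  congr 1
  field_simp
  ring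

lemma integrable_exp_gaussianReal (m : ℝ) (v : ℝ≥0) (hv : v ≠ 0) (t : ℝ) :
    Integrable (fun x => Real.exp (t * x)) (gaussianReal m v) := by
  rw [gaussianReal_of_var_ne_zero m hv]
  have hmeas : Measurable fun x => (gaussianPDFReal m v x).toNNReal :=
    (measurable_gaussianPDFReal m v).real_toNNReal
  have hd : gaussianPDF m v = fun x => ((gaussianPDFReal m v x).toNNReal : ℝ≥0∞) := rfl
  rw [hd, integrable_withDensity_iff_integrable_smul hmeas]
  have heq : (fun x => ((gaussianPDFReal m v x).toNNReal : ℝ≥0) • Real.exp (t * x))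
      = fun x => Real.exp (m * t + v * t ^ 2 / 2) * gaussianPDFReal (m + v * t) v x := by
    funext x
    rw [NNReal.smul_def, Real.coe_toNNReal _ (gaussianPDFReal_nonneg m v x), smul_eq_mul,
      ← exp_mul_gaussianPDFReal' m v hv t x]
    ring
  rw [heq]
  exact (integrable_gaussianPDFReal _ _).const_mul _

lemma integral_exp_gaussianReal (m : ℝ) (v : ℝ≥0) (hv : v ≠ 0) (t : ℝ) :
    ∫ x, Real.exp (t * x) ∂(gaussianReal m v) = Real.exp (m * t + v * t ^ 2 / 2) := by
  rw [gaussianReal_of_var_ne_zero m hv]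
  have hmeas : Measurable fun x => (gaussianPDFReal m v x).toNNReal :=
    (measurable_gaussianPDFReal m v).real_toNNReal
  have hd : gaussianPDF m v = fun x => ((gaussianPDFReal m v x).toNNReal : ℝ≥0∞) := rfl
  rw [hd, integral_withDensity_eq_integral_smul hmeas]
  have heq : (fun x => ((gaussianPDFReal m v x).toNNReal : ℝ≥0) • Real.exp (t * x))
      = fun x => Real.exp (m * t + v * t ^ 2 / 2) * gaussianPDFReal (m + v * t) v x := by
    funext x
    rw [NNReal.smul_def, Real.coe_toNNReal _ (gaussianPDFReal_nonneg m v x), smul_eq_mul,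
      ← exp_mul_gaussianPDFReal' m v hv t x]
    ring
  rw [heq, integral_const_mul, integral_gaussianPDFReal_eq_one _ hv, mul_one]

lemma quad_bounded (b d C : ℝ) (h : ∀ t : ℝ, b * t + d * t ^ 2 ≤ C) :
    d ≤ 0 ∧ (d = 0 → b = 0) := by
  constructor
  · by_contra hd
    push_neg at hd
    have htend : Tendsto (fun t : ℝ => b * t + d * t ^ 2) atTop atTop := by
      have h1 : Tendsto (fun t : ℝ => b + d * t) atTop atTop :=
        tendsto_atTop_add_const_left _ b (tendsto_id.const_mul_atTop hd)
      have h2 : Tendsto (fun t : ℝ => t * (b + d * t)) atTop atTop :=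
        tendsto_id.atTop_mul_atTop₀ h1
      exact h2.congr (fun t => by ring)
    obtain ⟨t, ht⟩ := (htend.eventually_gt_atTop C).exists
    exact absurd (h t) (not_le.mpr ht)
  · intro hd
    by_contra hb
    have hkey := h ((C + 1) / b)
    rw [hd] at hkey
    have hbt : b * ((C + 1) / b) = C + 1 := by field_simp
    rw [hbt] at hkey
    nlinarith

lemma exp_quad_tendsto_zero {b d : ℝ} (hd : d < 0) :
    Tendsto (fun t : ℝ => Real.exp (b * t + d * t ^ 2)) atTop (nhds 0) := by
  have h1 : Tendsto (fun t : ℝ => b + d * t) atTop atBot := by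
    apply tendsto_atBot_add_const_left _ b
    exact (tendsto_const_mul_atBot_of_neg hd).mpr tendsto_id
  have h2 : Tendsto (fun t : ℝ => t * (b + d * t)) atTop atBot :=
    tendsto_id.atTop_mul_atBot₀ h1
  have h3 : Tendsto (fun t : ℝ => b * t + d * t ^ 2) atTop atBot :=
    h2.congr (fun t => by ring)
  exact Real.tendsto_exp_atBot.comp h3

lemma key_exp (a b₁ b₂ d₁ d₂ : ℝ) (ha : 0 < a) (ha1 : a < 1)
    (h : ∀ t : ℝ, a * Real.exp (b₁ * t + d₁ * t ^ 2)
        + (1 - a) * Real.exp (b₂ * t + d₂ * t ^ 2) = 1) :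
    b₁ = 0 ∧ b₂ = 0 ∧ d₁ = 0 ∧ d₂ = 0 := by
  have ha2 : 0 < 1 - a := by linarith
  have hb₁ : ∀ t : ℝ, b₁ * t + d₁ * t ^ 2 ≤ Real.log (1 / a) := by
    intro t
    have h2 : a * Real.exp (b₁ * t + d₁ * t ^ 2) ≤ 1 := by
      have := h t
      nlinarith [Real.exp_pos (b₂ * t + d₂ * t ^ 2)]
    have h3 : Real.exp (b₁ * t + d₁ * t ^ 2) ≤ 1 / a := by
      rw [le_div_iff₀ ha]; linarith [mul_comm a (Real.exp (b₁ * t + d₁ * t ^ 2))]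
    calc b₁ * t + d₁ * t ^ 2 ≤ Real.log (Real.exp (b₁ * t + d₁ * t ^ 2)) := by
          rw [Real.log_exp]
      _ ≤ Real.log (1 / a) := Real.log_le_log (Real.exp_pos _) h3
  have hb₂ : ∀ t : ℝ, b₂ * t + d₂ * t ^ 2 ≤ Real.log (1 / (1 - a)) := by
    intro t
    have h2 : (1 - a) * Real.exp (b₂ * t + d₂ * t ^ 2) ≤ 1 := by
      have := h t
      nlinarith [Real.exp_pos (b₁ * t + d₁ * t ^ 2)]
    have h3 : Real.exp (b₂ * t + d₂ * t ^ 2) ≤ 1 / (1 - a) := by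
      rw [le_div_iff₀ ha2]; linarith [mul_comm (1 - a) (Real.exp (b₂ * t + d₂ * t ^ 2))]
    calc b₂ * t + d₂ * t ^ 2 ≤ Real.log (Real.exp (b₂ * t + d₂ * t ^ 2)) := by
          rw [Real.log_exp]
      _ ≤ Real.log (1 / (1 - a)) := Real.log_le_log (Real.exp_pos _) h3
  obtain ⟨hd₁le, hd₁b⟩ := quad_bounded _ _ _ hb₁
  obtain ⟨hd₂le, hd₂b⟩ := quad_bounded _ _ _ hb₂
  have hd₁ : d₁ = 0 := by
    rcases eq_or_lt_of_le hd₁le with h' | h'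
    · exact h'
    · exfalso
      rcases eq_or_lt_of_le hd₂le with h2' | h2'
      · have hb2 : b₂ = 0 := hd₂b h2'
        have hE1 : ∀ t : ℝ, Real.exp (b₁ * t + d₁ * t ^ 2) = 1 := by
          intro t
          have ht := h t
          have hz : b₂ * t + d₂ * t ^ 2 = 0 := by rw [hb2, h2']; ring
          rw [hz, Real.exp_zero, mul_one] at ht
          refine mul_left_cancel₀ ha.ne' ?_
          rw [mul_one]; linarith
        have := exp_quad_tendsto_zero (b := b₁) h'
        have h1 : Tendsto (fun _ : ℝ => (1 : ℝ)) atTop (nhds 0) := by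
          refine Tendsto.congr (fun t => hE1 t) this
        have := tendsto_nhds_unique h1 tendsto_const_nhds
        norm_num at this
      · have hT : Tendsto (fun t : ℝ => a * Real.exp (b₁ * t + d₁ * t ^ 2)
            + (1 - a) * Real.exp (b₂ * t + d₂ * t ^ 2)) atTop (nhds 0) := by
          have := ((exp_quad_tendsto_zero (b := b₁) h').const_mul a).add
            ((exp_quad_tendsto_zero (b := b₂) h2').const_mul (1 - a))
          simpa using this
        have hT1 : Tendsto (fun _ : ℝ => (1 : ℝ)) atTop (nhds 0) :=
          Tendsto.congr (fun t => h t) hT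
        have := tendsto_nhds_unique hT1 tendsto_const_nhds
        norm_num at this
  have hd₂ : d₂ = 0 := by
    rcases eq_or_lt_of_le hd₂le with h' | h'
    · exact h'
    · exfalso
      have hb1 : b₁ = 0 := hd₁b hd₁
      have hE2 : ∀ t : ℝ, Real.exp (b₂ * t + d₂ * t ^ 2) = 1 := by
        intro t
        have ht := h t
        have hz : b₁ * t + d₁ * t ^ 2 = 0 := by rw [hb1, hd₁]; ring
        rw [hz, Real.exp_zero, mul_one] at ht
        refine mul_left_cancel₀ ha2.ne' ?_
        rw [mul_one]; linarith
      have := exp_quad_tendsto_zero (b := b₂) h'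
      have h1 : Tendsto (fun _ : ℝ => (1 : ℝ)) atTop (nhds 0) :=
        Tendsto.congr (fun t => hE2 t) this
      have := tendsto_nhds_unique h1 tendsto_const_nhds
      norm_num at this
  exact ⟨hd₁b hd₁, hd₂b hd₂, hd₁, hd₂⟩

lemma gauss_var_ne_zero {ρ : ℝ} (hρ : 0 < ρ) : (⟨ρ ^ 2, sq_nonneg ρ⟩ : ℝ≥0) ≠ 0 := by
  intro h
  have := congrArg NNReal.toReal h
  change ρ ^ 2 = 0 at this
  nlinarith

lemma integral_exp_gauss {m ρ : ℝ} (hρ : 0 < ρ) (t : ℝ) :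
    ∫ x, Real.exp (t * x) ∂(gauss m ρ) = Real.exp (m * t + ρ ^ 2 * t ^ 2 / 2) :=
  integral_exp_gaussianReal m _ (gauss_var_ne_zero hρ) t

lemma integrable_exp_gauss {m ρ : ℝ} (hρ : 0 < ρ) (t : ℝ) :
    Integrable (fun x => Real.exp (t * x)) (gauss m ρ) :=
  integrable_exp_gaussianReal m _ (gauss_var_ne_zero hρ) t

theorem stmt10 (a μ₁ μ₂ σ₁ σ₂ : ℝ)
    (ha : a ∈ Set.Ioo (0 : ℝ) 1)
    (hσ₁ : 0 < σ₁) (hσ₂ : 0 < σ₂)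
    (hne : (μ₁, σ₁) ≠ (μ₂, σ₂)) :
    ¬ ∃ (f : ℝ → ℝ) (ν₀ ν₁ ν₂ ρ₀ ρ₁ ρ₂ : ℝ),
        IsAdmissibleFlow f ∧ 0 < ρ₀ ∧ 0 < ρ₁ ∧ 0 < ρ₂ ∧
        Measure.map f (gauss ν₀ ρ₀)
          = ENNReal.ofReal a • gauss μ₁ σ₁ + ENNReal.ofReal (1 - a) • gauss μ₂ σ₂ ∧
        Measure.map f (gauss ν₁ ρ₁) = gauss μ₁ σ₁ ∧
        Measure.map f (gauss ν₂ ρ₂) = gauss μ₂ σ₂ := by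
  rintro ⟨f, ν₀, ν₁, ν₂, ρ₀, ρ₁, ρ₂, ⟨hbij, hC1, -⟩, hρ₀, hρ₁, hρ₂, h0, h1, h2⟩
  obtain ⟨ha0, ha1⟩ := ha
  have ha1' : (0:ℝ) < 1 - a := by linarith
  have hcont : Continuous f := hC1.continuous
  have hemb : MeasurableEmbedding f := hcont.measurableEmbedding hbij.injective
  have hmeasf : Measurable f := hemb.measurable
  -- transfer the mixture identity back to the base measures
  have hsum : gauss ν₀ ρ₀
      = ENNReal.ofReal a • gauss ν₁ ρ₁ + ENNReal.ofReal (1 - a) • gauss ν₂ ρ₂ := by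
    have hmap : Measure.map f (gauss ν₀ ρ₀)
        = Measure.map f (ENNReal.ofReal a • gauss ν₁ ρ₁
            + ENNReal.ofReal (1 - a) • gauss ν₂ ρ₂) := by
      rw [Measure.map_add _ _ hmeasf, Measure.map_smul, Measure.map_smul, h1, h2, h0]
    calc gauss ν₀ ρ₀ = (Measure.map f (gauss ν₀ ρ₀)).comap f := (hemb.comap_map _).symm
      _ = _ := by rw [hmap, hemb.comap_map]
  -- mgf identity
  have hmgf : ∀ t : ℝ, Real.exp (ν₀ * t + ρ₀ ^ 2 * t ^ 2 / 2)
      = a * Real.exp (ν₁ * t + ρ₁ ^ 2 * t ^ 2 / 2)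
        + (1 - a) * Real.exp (ν₂ * t + ρ₂ ^ 2 * t ^ 2 / 2) := by
    intro t
    have hL := integral_exp_gauss (m := ν₀) hρ₀ t
    rw [hsum, integral_add_measure
        ((integrable_exp_gauss hρ₁ t).smul_measure ENNReal.ofReal_ne_top)
        ((integrable_exp_gauss hρ₂ t).smul_measure ENNReal.ofReal_ne_top),
      integral_smul_measure, integral_smul_measure,
      ENNReal.toReal_ofReal ha0.le, ENNReal.toReal_ofReal ha1'.le,
      integral_exp_gauss hρ₁ t, integral_exp_gauss hρ₂ t] at hL
    rw [← hL]
    simp [smul_eq_mul]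
  -- normalized identity
  have hkey : ∀ t : ℝ, a * Real.exp ((ν₁ - ν₀) * t + ((ρ₁ ^ 2 - ρ₀ ^ 2) / 2) * t ^ 2)
      + (1 - a) * Real.exp ((ν₂ - ν₀) * t + ((ρ₂ ^ 2 - ρ₀ ^ 2) / 2) * t ^ 2) = 1 := by
    intro t
    have h := hmgf t
    have e0 := Real.exp_pos (ν₀ * t + ρ₀ ^ 2 * t ^ 2 / 2)
    have f1 : (ν₁ - ν₀) * t + ((ρ₁ ^ 2 - ρ₀ ^ 2) / 2) * t ^ 2
        = (ν₁ * t + ρ₁ ^ 2 * t ^ 2 / 2) - (ν₀ * t + ρ₀ ^ 2 * t ^ 2 / 2) := by ring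
    have f2 : (ν₂ - ν₀) * t + ((ρ₂ ^ 2 - ρ₀ ^ 2) / 2) * t ^ 2
        = (ν₂ * t + ρ₂ ^ 2 * t ^ 2 / 2) - (ν₀ * t + ρ₀ ^ 2 * t ^ 2 / 2) := by ring
    rw [f1, Real.exp_sub, f2, Real.exp_sub]
    have hc : a * (Real.exp (ν₁ * t + ρ₁ ^ 2 * t ^ 2 / 2) / Real.exp (ν₀ * t + ρ₀ ^ 2 * t ^ 2 / 2))
        + (1 - a) * (Real.exp (ν₂ * t + ρ₂ ^ 2 * t ^ 2 / 2)
            / Real.exp (ν₀ * t + ρ₀ ^ 2 * t ^ 2 / 2))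
        = (a * Real.exp (ν₁ * t + ρ₁ ^ 2 * t ^ 2 / 2)
            + (1 - a) * Real.exp (ν₂ * t + ρ₂ ^ 2 * t ^ 2 / 2))
          / Real.exp (ν₀ * t + ρ₀ ^ 2 * t ^ 2 / 2) := by ring
    rw [hc, ← h, div_self e0.ne']
  obtain ⟨hb1, hb2, hd1, hd2⟩ := key_exp a _ _ _ _ ha0 ha1 hkey
  -- hence the two base Gaussians coincide
  have hν : ν₁ = ν₂ := by linarith [sub_eq_zero.mp hb1, sub_eq_zero.mp hb2]
  have hρsq : ρ₁ ^ 2 = ρ₂ ^ 2 := by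
    have e1 : ρ₁ ^ 2 - ρ₀ ^ 2 = 0 := by
      have := hd1; field_simp at this; linarith
    have e2 : ρ₂ ^ 2 - ρ₀ ^ 2 = 0 := by
      have := hd2; field_simp at this; linarith
    linarith
  have hg : gauss ν₁ ρ₁ = gauss ν₂ ρ₂ := by
    unfold gauss
    rw [hν]
    congr 1
    exact Subtype.ext hρsq
  have hμσ : gauss μ₁ σ₁ = gauss μ₂ σ₂ := by rw [← h1, ← h2, hg]
  -- extract parameter equality via the mgf
  have hmgf2 : ∀ t : ℝ, μ₁ * t + σ₁ ^ 2 * t ^ 2 / 2 = μ₂ * t + σ₂ ^ 2 * t ^ 2 / 2 := by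
    intro t
    have := congrArg (fun μ => ∫ x, Real.exp (t * x) ∂μ) hμσ
    rw [integral_exp_gauss hσ₁ t, integral_exp_gauss hσ₂ t] at this
    exact Real.exp_injective this
  have hp := hmgf2 1
  have hm := hmgf2 (-1)
  have hμ : μ₁ = μ₂ := by norm_num at hp hm; linarith
  have hσsq : σ₁ ^ 2 = σ₂ ^ 2 := by norm_num at hp hm; linarith
  have hσ : σ₁ = σ₂ := by nlinarith
  exact hne (by rw [hμ, hσ])
end
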